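/- Let d ≥ 4, a ≥ 2, σ ≥ a be integers, and let n₀ ≥ n₁ ≥ ... ≥ n_{σ-1} ≥ σ be a nonincreasing sequence of integers with n₀ ≥ d - 1. Suppose the sequence has no gaps in the range below d-1, meaning: for every index r with 1 ≤ r ≤ σ-1 and n_r ≤ d - 2, one has n_{r-1} ≤ n_r + 1. Suppose further that n_{a-1} < d - 2 and n_{a-1} ≥ d - a. Then Σ_{i=0}^{σ-1} (n_i - i) ≥ a(d-a). -/

import Mathlib

theorem stmt_14 (d : ℤ) (a σ : ℕ) (n : ℕ → ℤ) (hd : 4 ≤ d) (ha : 2 ≤ a) (haσ : a ≤ σ)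
    (hmono : ∀ i : ℕ, i + 1 < σ → n (i + 1) ≤ n i)
    (hlast : (σ : ℤ) ≤ n (σ - 1))
    (h0 : d - 1 ≤ n 0)
    (hnogap : ∀ r : ℕ, 1 ≤ r → r ≤ σ - 1 → n r ≤ d - 2 → n (r - 1) ≤ n r + 1)
    (hna1 : n (a - 1) < d - 2)
    (hna2 : d - (a : ℤ) ≤ n (a - 1)) :
    (a : ℤ) * (d - (a : ℤ)) ≤ ∑ i ∈ Finset.range σ, (n i - (i : ℤ)) := by
  have hσ2 : 2 ≤ σ := le_trans ha haσ
  -- monotonicity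
  have mono : ∀ j, j < σ → ∀ i, i ≤ j → n j ≤ n i := by
    intro j hj
    induction j with
    | zero =>
      intro i hi
      have : i = 0 := Nat.le_zero.mp hi
      rw [this]
    | succ m ih =>
      intro i hi
      rcases Nat.eq_or_lt_of_le hi with h | h
      · rw [← h]
      · have h1 : n (m + 1) ≤ n m := hmono m hj
        have h2 : n m ≤ n i := ih (by omega) i (by omega)
        linarith
  -- definition of k
  have hexw : n (a - 1) ≤ d - 2 := by linarith
  have hex : ∃ i, n i ≤ d - 2 := ⟨a - 1, hexw⟩
  set k := Nat.find hex with hkdef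
  have hk : n k ≤ d - 2 := Nat.find_spec hex
  have hka : k ≤ a - 1 := Nat.find_le hexw
  have hkmin : ∀ i, i < k → d - 1 ≤ n i := by
    intro i hi
    have h := Nat.find_min hex hi
    omega
  have hk1 : 1 ≤ k := by
    by_contra h
    have hk0 : k = 0 := by omega
    rw [hk0] at hk
    linarith
  have hnk : d - 2 ≤ n k := by
    have h1 := hnogap k hk1 (by omega) hk
    have h2 := hkmin (k - 1) (by omega)
    omega
  -- chain bound
  have chain : ∀ i, k ≤ i → i ≤ a - 1 → d - 2 + (k : ℤ) - i ≤ n i := by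
    intro i hki
    induction i, hki using Nat.le_induction with
    | base => intro _; push_cast; linarith
    | succ m hm ih =>
      intro hma
      have h1 : n (m + 1) ≤ n k := mono (m + 1) (by omega) k (by omega)
      have h2 := hnogap (m + 1) (by omega) (by omega) (by linarith)
      simp only [Nat.add_sub_cancel] at h2
      have h3 := ih (by omega)
      push_cast
      push_cast at h3
      linarith
  -- tail sum is nonneg
  have htail : 0 ≤ ∑ i ∈ Finset.Ico a σ, (n i - (i : ℤ)) := by
    apply Finset.sum_nonneg
    intro i hi
    rw [Finset.mem_Ico] at hi
    have h1 := mono (σ - 1) (by omega) i (by omega)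
    have h2 : (i : ℤ) < (σ : ℤ) := by exact_mod_cast hi.2
    linarith
  have hsplit : ∑ i ∈ Finset.range a, (n i - (i : ℤ))
      + ∑ i ∈ Finset.Ico a σ, (n i - (i : ℤ)) = ∑ i ∈ Finset.range σ, (n i - (i : ℤ)) :=
    Finset.sum_range_add_sum_Ico _ haσ
  -- pointwise lower bound on range a
  set b : ℕ → ℤ := fun i => if i < k then d - 1 - (i : ℤ) else d - 2 + (k : ℤ) - 2 * (i : ℤ)
    with hbdef
  have hb : ∑ i ∈ Finset.range a, b i ≤ ∑ i ∈ Finset.range a, (n i - (i : ℤ)) := by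
    apply Finset.sum_le_sum
    intro i hi
    rw [Finset.mem_range] at hi
    by_cases hik : i < k
    · have := hkmin i hik
      simp only [hbdef, if_pos hik]
      linarith
    · have := chain i (by omega) (by omega)
      simp only [hbdef, if_neg hik]
      linarith
  -- Gauss
  have gauss : ∀ m : ℕ, 2 * (∑ i ∈ Finset.range m, (i : ℤ)) = m * (m - 1) := by
    intro m
    induction m with
    | zero => simp
    | succ p ih =>
      rw [Finset.sum_range_succ]
      push_cast
      push_cast at ih
      ring_nf
      ring_nf at ih
      linarith
  -- compute sum of b
  have lin : ∀ m : ℕ, ∀ c : ℤ, ∑ i ∈ Finset.range m, (c - 2 * (i : ℤ))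
      = m * c - 2 * (∑ i ∈ Finset.range m, (i : ℤ)) := by
    intro m c
    rw [Finset.sum_sub_distrib, Finset.sum_const, Finset.card_range, ← Finset.mul_sum]
    simp [nsmul_eq_mul]
  have hbsplit : ∑ i ∈ Finset.range k, b i + ∑ i ∈ Finset.Ico k a, b i
      = ∑ i ∈ Finset.range a, b i := Finset.sum_range_add_sum_Ico _ (by omega)
  have hb1 : ∑ i ∈ Finset.range k, b i = ∑ i ∈ Finset.range k, (d - 1 - (i : ℤ)) := by
    apply Finset.sum_congr rfl
    intro i hi
    rw [Finset.mem_range] at hi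
    simp [hbdef, hi]
  have hb2 : ∑ i ∈ Finset.Ico k a, b i
      = ∑ i ∈ Finset.Ico k a, (d - 2 + (k : ℤ) - 2 * (i : ℤ)) := by
    apply Finset.sum_congr rfl
    intro i hi
    rw [Finset.mem_Ico] at hi
    simp [hbdef, Nat.not_lt.mpr hi.1]
  have hIco : ∑ i ∈ Finset.Ico k a, (d - 2 + (k : ℤ) - 2 * (i : ℤ))
      = ∑ i ∈ Finset.range a, (d - 2 + (k : ℤ) - 2 * (i : ℤ))
        - ∑ i ∈ Finset.range k, (d - 2 + (k : ℤ) - 2 * (i : ℤ)) :=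
    Finset.sum_Ico_eq_sub _ (by omega)
  have hsum1 : ∑ i ∈ Finset.range k, (d - 1 - (i : ℤ))
      = k * (d - 1) - ∑ i ∈ Finset.range k, (i : ℤ) := by
    have := lin k (d - 1)
    calc ∑ i ∈ Finset.range k, (d - 1 - (i : ℤ))
        = ∑ i ∈ Finset.range k, ((d - 1 : ℤ) - (i : ℤ)) := rfl
      _ = k * (d - 1) - ∑ i ∈ Finset.range k, (i : ℤ) := by
          rw [Finset.sum_sub_distrib, Finset.sum_const, Finset.card_range]
          simp [nsmul_eq_mul]
  have g1 := gauss a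
  have g2 := gauss k
  have l1 := lin a (d - 2 + (k : ℤ))
  have l2 := lin k (d - 2 + (k : ℤ))
  have hkZ : (1 : ℤ) ≤ (k : ℤ) := by exact_mod_cast hk1
  have hkaZ : (k : ℤ) ≤ (a : ℤ) - 1 := by
    have : (k : ℤ) ≤ ((a - 1 : ℕ) : ℤ) := by exact_mod_cast hka
    have h2 : ((a - 1 : ℕ) : ℤ) = (a : ℤ) - 1 := by
      have : (1 : ℕ) ≤ a := by omega
      push_cast [this]
      ring
    linarith
  have haZ : (2 : ℤ) ≤ (a : ℤ) := by exact_mod_cast ha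
  have key : (a : ℤ) * (d - (a : ℤ)) ≤ ∑ i ∈ Finset.range a, b i := by
    rw [← hbsplit, hb1, hb2, hIco, hsum1, l1, l2]
    nlinarith [mul_nonneg (by linarith : (0 : ℤ) ≤ (k : ℤ) - 1)
      (by linarith : (0 : ℤ) ≤ 2 * (a : ℤ) - (k : ℤ))]
  linarith
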